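/- For all complex numbers z1, z2, the absolute value of the imaginary part of (z2·ln|z2|² − z1·ln|z1|²)·(conj(z2) − conj(z1)) is at most 2·|z2 − z1|², where by convention z·ln|z|² = 0 when z = 0. -/

import Mathlib

lemma aux_log_ineq (z1 z2 : ℂ) (hab : ‖z1‖ ≤ ‖z2‖) (h1 : z1 ≠ 0) :
    |(z2 * starRingEnd ℂ z1).im| * |Real.log (‖z1‖ ^ 2) - Real.log (‖z2‖ ^ 2)|
      ≤ 2 * ‖z2 - z1‖ ^ 2 := by
  set a := ‖z1‖ with ha
  set b := ‖z2‖ with hb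
  set d := ‖z2 - z1‖ with hd
  have ha0 : 0 < a := by simpa [ha] using norm_pos_iff.mpr h1
  have hb0 : 0 < b := lt_of_lt_of_le ha0 hab
  have hd0 : 0 ≤ d := norm_nonneg _
  have hba : b - a ≤ d := by
    have h := norm_add_le (z2 - z1) z1
    simp only [sub_add_cancel] at h
    simpa [hb, ha, hd] using by linarith
  -- bound on imaginary part
  have hs : |(z2 * starRingEnd ℂ z1).im| ≤ d * a := by
    have h1' : (z2 * starRingEnd ℂ z1).im = ((z2 - z1) * starRingEnd ℂ z1).im := by
      simp [Complex.mul_im, Complex.sub_im, Complex.sub_re, Complex.conj_re, Complex.conj_im]; ring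
    rw [h1']
    calc |((z2 - z1) * starRingEnd ℂ z1).im| ≤ ‖(z2 - z1) * starRingEnd ℂ z1‖ :=
          Complex.abs_im_le_norm _
      _ = d * a := by rw [norm_mul, Complex.norm_conj]
  -- bound on log
  have hlog : |Real.log (a ^ 2) - Real.log (b ^ 2)| ≤ 2 * (b - a) / a := by
    have hlab : Real.log a ≤ Real.log b := Real.log_le_log ha0 hab
    rw [Real.log_pow, Real.log_pow, abs_of_nonpos (by push_cast; linarith)]
    have : Real.log b - Real.log a ≤ (b - a) / a := by
      have h := Real.log_le_sub_one_of_pos (x := b / a) (by positivity)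
      rw [Real.log_div (ne_of_gt hb0) (ne_of_gt ha0)] at h
      have : b / a - 1 = (b - a) / a := by field_simp
      linarith [h, this ▸ h]
    have h2 : 2 * (b - a) / a = 2 * ((b - a) / a) := by ring
    push_cast
    rw [h2]
    linarith
  calc |(z2 * starRingEnd ℂ z1).im| * |Real.log (a ^ 2) - Real.log (b ^ 2)|
      ≤ (d * a) * (2 * (b - a) / a) := by
        apply mul_le_mul hs hlog (abs_nonneg _) (by positivity)
    _ = 2 * d * (b - a) := by field_simp
    _ ≤ 2 * d ^ 2 := by nlinarith

/-- Cazenave–Haraux logarithmic inequality: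
`|Im((z₂ ln|z₂|² − z₁ ln|z₁|²)(conj z₂ − conj z₁))| ≤ 2|z₂ − z₁|²`. -/
theorem stmt_0 (z1 z2 : ℂ) :
    |((z2 * (Real.log (‖z2‖ ^ 2) : ℂ) - z1 * (Real.log (‖z1‖ ^ 2) : ℂ)) *
        (starRingEnd ℂ z2 - starRingEnd ℂ z1)).im| ≤ 2 * ‖z2 - z1‖ ^ 2 := by
  have key : ((z2 * (Real.log (‖z2‖ ^ 2) : ℂ) - z1 * (Real.log (‖z1‖ ^ 2) : ℂ)) *
        (starRingEnd ℂ z2 - starRingEnd ℂ z1)).im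
      = (z2 * starRingEnd ℂ z1).im *
          (Real.log (‖z1‖ ^ 2) - Real.log (‖z2‖ ^ 2)) := by
    simp [Complex.mul_im, Complex.mul_re, Complex.sub_im, Complex.sub_re, Complex.conj_re,
      Complex.conj_im, Complex.ofReal_re, Complex.ofReal_im]
    ring
  rw [key, abs_mul]
  rcases eq_or_ne z1 0 with h1 | h1
  · simp [h1]
  rcases eq_or_ne z2 0 with h2 | h2
  · simp [h2]
  rcases le_total (‖z1‖) (‖z2‖) with h | h
  · exact aux_log_ineq z1 z2 h h1
  · have haux := aux_log_ineq z2 z1 h h2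
    have hsw : |(z1 * starRingEnd ℂ z2).im| = |(z2 * starRingEnd ℂ z1).im| := by
      rw [show (z1 * starRingEnd ℂ z2).im = -(z2 * starRingEnd ℂ z1).im by
        simp [Complex.mul_im, Complex.conj_re, Complex.conj_im]; ring, abs_neg]
    rw [hsw, abs_sub_comm, norm_sub_rev z1 z2] at haux
    exact haux
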